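/- arXiv:2001.08800 — 12 statements merged into one kernel-verified Lean document; each statement's English description precedes it below -/
import Mathlib

section
/- Let X be a completely regular Hausdorff topological space. Then X is compact if and only if the inclusion C*(X) ⊆ B(X) satisfies Condition (C): for all bounded subsets S, T of C*(X) and every real ε > 0, if the pointwise infimum of S plus the constant ε is pointwise less than or equal to the pointwise supremum of T, then there exist finite subsets S₀ ⊆ S and T₀ ⊆ T such that the pointwise minimum of S₀ is less than or equal to the pointwise maximum of T₀. -/
/-- A completely regular Hausdorff space `X` is compact iff the inclusion
`C*(X) ⊆ B(X)` satisfies Condition (C). -/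
theorem stmt_0 (X : Type*) [TopologicalSpace X] [CompletelyRegularSpace X] [T2Space X] :
    CompactSpace X ↔
      ∀ (S T : Set (X → ℝ)) (ε : ℝ), 0 < ε →
        S.Nonempty → T.Nonempty →
        (∀ f ∈ S, Continuous f) → (∀ g ∈ T, Continuous g) →
        (∃ M : ℝ, ∀ f ∈ S, ∀ x, |f x| ≤ M) →
        (∃ M : ℝ, ∀ g ∈ T, ∀ x, |g x| ≤ M) →
        (∀ x, sInf ((fun f => f x) '' S) + ε ≤ sSup ((fun g => g x) '' T)) →
        ∃ S₀ T₀ : Set (X → ℝ), S₀ ⊆ S ∧ T₀ ⊆ T ∧ S₀.Finite ∧ T₀.Finite ∧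
          S₀.Nonempty ∧ T₀.Nonempty ∧
          ∀ x, sInf ((fun f => f x) '' S₀) ≤ sSup ((fun g => g x) '' T₀) := by
  constructor
  · intro hc S T ε hε hS hT hScont hTcont _ _ hle
    rcases isEmpty_or_nonempty X with hX | hX
    · obtain ⟨f, hf⟩ := hS; obtain ⟨g, hg⟩ := hT
      exact ⟨{f}, {g}, by simpa using hf, by simpa using hg, Set.finite_singleton _,
        Set.finite_singleton _, ⟨f, rfl⟩, ⟨g, rfl⟩, fun x => (IsEmpty.false x).elim⟩
    · have key : ∀ x : X, ∃ f ∈ S, ∃ g ∈ T, f x < g x := by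
        intro x
        have hne : ((fun f => f x) '' S).Nonempty := hS.image _
        have hne' : ((fun g => g x) '' T).Nonempty := hT.image _
        obtain ⟨a, haS, ha⟩ := exists_lt_of_csInf_lt hne
          (show sInf ((fun f => f x) '' S) < sInf ((fun f => f x) '' S) + ε/3 by linarith)
        obtain ⟨b, hbT, hb⟩ := exists_lt_of_lt_csSup hne'
          (show sSup ((fun g => g x) '' T) - ε/3 < sSup ((fun g => g x) '' T) by linarith)
        obtain ⟨f, hf, rfl⟩ := haS
        obtain ⟨g, hg, rfl⟩ := hbT
        have := hle x
        exact ⟨f, hf, g, hg, by linarith⟩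
      choose f hfS g hgT hfg using key
      have hVopen : ∀ x : X, IsOpen {y | f x y < g x y} :=
        fun x => isOpen_lt (hScont _ (hfS x)) (hTcont _ (hgT x))
      have hcov : (Set.univ : Set X) ⊆ ⋃ x, {y | f x y < g x y} :=
        fun y _ => Set.mem_iUnion.mpr ⟨y, hfg y⟩
      obtain ⟨t, ht⟩ := isCompact_univ.elim_finite_subcover _ hVopen hcov
      have htne : t.Nonempty := by
        obtain ⟨x, hxt, -⟩ := Set.mem_iUnion₂.mp (ht (Set.mem_univ hX.some))
        exact ⟨x, hxt⟩
      refine ⟨f '' ↑t, g '' ↑t, Set.image_subset_iff.mpr (fun x _ => hfS x),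
        Set.image_subset_iff.mpr (fun x _ => hgT x), t.finite_toSet.image _,
        t.finite_toSet.image _, htne.to_set.image _, htne.to_set.image _, fun y => ?_⟩
      obtain ⟨x, hxt, hxy⟩ := Set.mem_iUnion₂.mp (ht (Set.mem_univ y))
      have h1 : sInf ((fun f => f y) '' (f '' ↑t)) ≤ f x y :=
        csInf_le ((t.finite_toSet.image f).image _).bddBelow ⟨f x, ⟨x, hxt, rfl⟩, rfl⟩
      have h2 : g x y ≤ sSup ((fun g => g y) '' (g '' ↑t)) :=
        le_csSup ((t.finite_toSet.image g).image _).bddAbove ⟨g x, ⟨x, hxt, rfl⟩, rfl⟩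
      have : f x y < g x y := hxy
      linarith
  · intro h
    rcases isEmpty_or_nonempty X with hX | hX
    · exact Finite.compactSpace
    constructor
    apply isCompact_of_finite_subcover
    intro ι U hU hcov
    have hi : ∀ x : X, ∃ i, x ∈ U i := fun x => Set.mem_iUnion.mp (hcov (Set.mem_univ x))
    choose i hxi using hi
    have hbump : ∀ x : X, ∃ gg : X → ℝ, Continuous gg ∧ gg x = 1 ∧
        (∀ y, 0 ≤ gg y ∧ gg y ≤ 1) ∧ ∀ y, 0 < gg y → y ∈ U (i x) := by
      intro x
      obtain ⟨f, hfc, hfx, hfK⟩ := CompletelyRegularSpace.completely_regular x (U (i x))ᶜ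
        (hU (i x)).isClosed_compl (by simp [hxi x])
      refine ⟨fun y => 1 - (f y : ℝ), continuous_const.sub (continuous_subtype_val.comp hfc),
        by simp [hfx],
        fun y => ⟨by simpa using (f y).2.2, by simpa using (f y).2.1⟩,
        fun y hy => ?_⟩
      by_contra hyU
      have hfy : (f y : ℝ) = 1 := by
        have := hfK hyU
        simp only [this]
        rfl
      simp only [hfy] at hy
      norm_num at hy
    choose g hgc hgx hgb hgU using hbump
    have hmain := h {fun _ => (1:ℝ)/2} (Set.range g) (1/2) (by norm_num)
      ⟨_, rfl⟩ ⟨g hX.some, hX.some, rfl⟩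
      (by rintro f hf; rw [Set.mem_singleton_iff] at hf; subst hf; exact continuous_const)
      (by rintro _ ⟨x, rfl⟩; exact hgc x)
      ⟨1/2, by rintro f hf x; rw [Set.mem_singleton_iff] at hf; subst hf; exact abs_le.mpr ⟨by norm_num, by norm_num⟩⟩
      ⟨1, by rintro _ ⟨x, rfl⟩ y; exact abs_le.mpr ⟨by linarith [(hgb x y).1], (hgb x y).2⟩⟩
      (by
        intro x
        have him : (fun f => f x) '' {fun _ => (1:ℝ)/2} = {(1:ℝ)/2} := by
          simp
        rw [him, csInf_singleton]
        have hba : BddAbove ((fun gg => gg x) '' Set.range g) := by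
          refine ⟨1, ?_⟩
          rintro _ ⟨_, ⟨x', rfl⟩, rfl⟩
          exact (hgb x' x).2
        have h1 : (1:ℝ) ≤ sSup ((fun gg => gg x) '' Set.range g) := by
          have := le_csSup hba (⟨g x, ⟨x, rfl⟩, rfl⟩ :
            g x x ∈ (fun gg => gg x) '' Set.range g)
          rw [hgx x] at this
          exact this
        linarith)
    obtain ⟨S₀, T₀, hS₀, hT₀, _, hT₀f, hS₀n, hT₀n, hfinal⟩ := hmain
    have hS₀eq : S₀ = {fun _ => (1:ℝ)/2} := (Set.Nonempty.subset_singleton_iff hS₀n).mp hS₀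
    have key : ∀ gg ∈ T₀, ∃ j : ι, ∀ y, 0 < gg y → y ∈ U j := by
      intro gg hgg
      obtain ⟨x', rfl⟩ := hT₀ hgg
      exact ⟨i x', hgU x'⟩
    classical
    have : Nonempty ι := ⟨i hX.some⟩
    choose! ind hind using key
    refine ⟨hT₀f.toFinset.image ind, fun x _ => ?_⟩
    have h12 : (1:ℝ)/2 ≤ sSup ((fun gg => gg x) '' T₀) := by
      have := hfinal x
      rw [hS₀eq] at this
      simpa using this
    have hmem : sSup ((fun gg => gg x) '' T₀) ∈ (fun gg => gg x) '' T₀ :=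
      (hT₀n.image _).csSup_mem (hT₀f.image _)
    obtain ⟨gg, hggT₀, hggx⟩ := hmem
    have hpos : 0 < gg x := by rw [show gg x = _ from hggx]; linarith
    refine Set.mem_iUnion₂.mpr ⟨ind gg, ?_, hind gg hggT₀ x hpos⟩
    exact Finset.mem_image.mpr ⟨gg, hT₀f.mem_toFinset.mpr hggT₀, rfl⟩
end

section
/- Let X be a compact Hausdorff space, let f be a bounded upper semicontinuous real-valued function on X, let g be a bounded lower semicontinuous real-valued function on X, and let ε > 0 be real. If f(x) + ε ≤ g(x) for all x ∈ X, then there exists a continuous function a : X → ℝ with f(x) ≤ a(x) ≤ g(x) for all x ∈ X. -/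
/-- On a compact Hausdorff space, if `f` is bounded usc, `g` is bounded lsc,
and `f + ε ≤ g`, then there is a continuous `a` with `f ≤ a ≤ g`. -/
theorem stmt_1 {X : Type*} [TopologicalSpace X] [CompactSpace X] [T2Space X]
    (f g : X → ℝ) (ε : ℝ) (hε : 0 < ε)
    (hfb : ∃ M : ℝ, ∀ x, |f x| ≤ M) (hgb : ∃ M : ℝ, ∀ x, |g x| ≤ M)
    (hf : ∀ l : ℝ, IsOpen (f ⁻¹' Set.Iio l)) (hg : ∀ l : ℝ, IsOpen (g ⁻¹' Set.Ioi l))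
    (hfg : ∀ x, f x + ε ≤ g x) :
    ∃ a : X → ℝ, Continuous a ∧ ∀ x, f x ≤ a x ∧ a x ≤ g x := by
  obtain ⟨M, hM⟩ := hfb
  set δ : ℝ := ε / 2 with hδdef
  have hδ : 0 < δ := by positivity
  set lo : ℤ := ⌊(-M) / δ⌋ with hlo
  set hi : ℤ := ⌊M / δ⌋ + 1 with hhi
  set ι := ↥(Finset.Icc lo hi) with hι
  set c : ι → ℝ := fun k => ((k : ℤ) : ℝ) * δ with hc
  set U : ι → Set X := fun k => f ⁻¹' Set.Iio (c k) ∩ g ⁻¹' Set.Ioi (c k) with hU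
  have hUopen : ∀ k, IsOpen (U k) := fun k => (hf _).inter (hg _)
  have hUcov : (Set.univ : Set X) ⊆ ⋃ k, U k := by
    intro x _
    set k : ℤ := ⌊f x / δ⌋ + 1 with hk
    have hk1 : f x < (k : ℝ) * δ := by
      have := Int.lt_floor_add_one (f x / δ)
      have h2 : f x / δ * δ < ((⌊f x / δ⌋ : ℝ) + 1) * δ := by
        exact mul_lt_mul_of_pos_right this hδ
      rw [div_mul_cancel₀ _ (ne_of_gt hδ)] at h2
      calc f x < ((⌊f x / δ⌋ : ℝ) + 1) * δ := h2
      _ = (k : ℝ) * δ := by push_cast [hk]; ring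
    have hk2 : (k : ℝ) * δ < g x := by
      have h1 : (⌊f x / δ⌋ : ℝ) ≤ f x / δ := Int.floor_le _
      have h2 : ((⌊f x / δ⌋ : ℝ) + 1) * δ ≤ (f x / δ + 1) * δ := by
        exact mul_le_mul_of_nonneg_right (by linarith) hδ.le
      have h3 : (f x / δ + 1) * δ = f x + δ := by field_simp
      have h4 : f x + δ < f x + ε := by
        rw [hδdef]; linarith
      calc (k : ℝ) * δ = ((⌊f x / δ⌋ : ℝ) + 1) * δ := by push_cast [hk]; ring
      _ ≤ f x + δ := by linarith
      _ < g x := lt_of_lt_of_le h4 (hfg x)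
    have hmem : k ∈ Finset.Icc lo hi := by
      rw [Finset.mem_Icc]
      constructor
      · have hfx : -M ≤ f x := neg_le_of_abs_le (hM x)
        have : (-M) / δ ≤ f x / δ := by gcongr
        calc lo = ⌊(-M) / δ⌋ := hlo
        _ ≤ ⌊f x / δ⌋ := Int.floor_le_floor this
        _ ≤ k := by omega
      · have hfx : f x ≤ M := le_of_abs_le (hM x)
        have : f x / δ ≤ M / δ := by gcongr
        calc k = ⌊f x / δ⌋ + 1 := hk
        _ ≤ ⌊M / δ⌋ + 1 := by
            have := Int.floor_le_floor this
            omega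
        _ = hi := hhi.symm
    exact Set.mem_iUnion.2 ⟨⟨k, hmem⟩, hk1, hk2⟩
  obtain ⟨p, hp⟩ := PartitionOfUnity.exists_isSubordinate isClosed_univ U hUopen hUcov
  refine ⟨fun x => ∑ k : ι, p k x * c k, ?_, ?_⟩
  · exact continuous_finset_sum _ fun k _ => ((p k).continuous).mul continuous_const
  · intro x
    have hsum : ∑ k : ι, p k x = 1 := by
      have := p.sum_eq_one (Set.mem_univ x)
      rwa [finsum_eq_sum_of_fintype] at this
    have hnn : ∀ k : ι, 0 ≤ p k x := fun k => p.nonneg k x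
    have hkey : ∀ k : ι, p k x ≠ 0 → x ∈ U k := by
      intro k hk
      exact hp k (subset_closure (by simpa [Function.mem_support] using hk))
    constructor
    · have : f x = ∑ k : ι, p k x * f x := by
        rw [← Finset.sum_mul, hsum, one_mul]
      rw [this]
      refine Finset.sum_le_sum fun k _ => ?_
      rcases eq_or_ne (p k x) 0 with h | h
      · simp [h]
      · have hx := (hkey k h).1
        have : f x < c k := hx
        exact mul_le_mul_of_nonneg_left this.le (hnn k)
    · have : g x = ∑ k : ι, p k x * g x := by
        rw [← Finset.sum_mul, hsum, one_mul]
      rw [this]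
      refine Finset.sum_le_sum fun k _ => ?_
      rcases eq_or_ne (p k x) 0 with h | h
      · simp [h]
      · have hx := (hkey k h).2
        have : c k < g x := hx
        exact mul_le_mul_of_nonneg_left this.le (hnn k)
end

section
/- (Katětov–Tong theorem, compact case) Let X be a compact Hausdorff space. If f is a bounded upper semicontinuous real-valued function on X and g is a bounded lower semicontinuous real-valued function on X with f(x) ≤ g(x) for all x ∈ X, then there exists a continuous function a : X → ℝ with f(x) ≤ a(x) ≤ g(x) for all x ∈ X. -/
open Set

/-- Invariant carried through the iteration. -/
def KTInv {X : Type*} [TopologicalSpace X] (f g : X → ℝ) (M : ℝ) : Prop :=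
  0 < M ∧ UpperSemicontinuous f ∧ LowerSemicontinuous g ∧
    (∀ x, f x ≤ g x) ∧ (∀ x, f x ≤ M) ∧ (∀ x, -M ≤ g x)

lemma kt_step {X : Type*} [TopologicalSpace X] [NormalSpace X] {f g : X → ℝ} {M : ℝ}
    (hI : KTInv f g M) :
    ∃ h : C(X, ℝ), (∀ x, |h x| ≤ M / 3) ∧ KTInv (f - ⇑h) (g - ⇑h) (2 / 3 * M) := by
  obtain ⟨hM, husc, hlsc, hfg, hfM, hgM⟩ := hI
  set A : Set X := (f ⁻¹' Iio (M / 3))ᶜ with hA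
  set B : Set X := (g ⁻¹' Ioi (-(M / 3)))ᶜ with hB
  have hAc : IsClosed A := (upperSemicontinuous_iff_isOpen_preimage.1 husc _).isClosed_compl
  have hBc : IsClosed B := (lowerSemicontinuous_iff_isOpen_preimage.1 hlsc _).isClosed_compl
  have hd : Disjoint A B := by
    rw [Set.disjoint_left]
    intro x hxA hxB
    simp only [hA, hB, mem_compl_iff, mem_preimage, mem_Iio, mem_Ioi, not_lt] at hxA hxB
    have := hfg x
    linarith
  obtain ⟨u, hu0, hu1, hu01⟩ := exists_continuous_zero_one_of_isClosed hAc hBc hd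
  refine ⟨⟨fun x => M / 3 * (1 - 2 * u x),
    (continuous_const.mul (continuous_const.sub (continuous_const.mul u.continuous)))⟩, ?_, ?_⟩
  · intro x
    have h1 := (hu01 x).1
    have h2 := (hu01 x).2
    rw [abs_le, ContinuousMap.coe_mk]
    constructor <;> [nlinarith; nlinarith]
  · have hbd : ∀ x, |M / 3 * (1 - 2 * u x)| ≤ M / 3 := by
      intro x
      have h1 := (hu01 x).1
      have h2 := (hu01 x).2
      rw [abs_le]
      constructor <;> [nlinarith; nlinarith]
    have hcont : Continuous fun x => M / 3 * (1 - 2 * u x) :=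
      continuous_const.mul (continuous_const.sub (continuous_const.mul u.continuous))
    refine ⟨by linarith, ?_, ?_, ?_, ?_, ?_⟩
    · have : UpperSemicontinuous fun x => f x + -(M / 3 * (1 - 2 * u x)) :=
        husc.add (hcont.neg.upperSemicontinuous)
      convert this using 1; funext x; simp [sub_eq_add_neg]
    · have : LowerSemicontinuous fun x => g x + -(M / 3 * (1 - 2 * u x)) :=
        hlsc.add (hcont.neg.lowerSemicontinuous)
      convert this using 1; funext x; simp [sub_eq_add_neg]
    · intro x
      simp only [Pi.sub_apply, ContinuousMap.coe_mk]
      have := hfg x; linarith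
    · intro x
      simp only [Pi.sub_apply, ContinuousMap.coe_mk]
      by_cases hx : M / 3 ≤ f x
      · have hxA : x ∈ A := by
          simp only [hA, mem_compl_iff, mem_preimage, mem_Iio, not_lt]; exact hx
        have : u x = 0 := hu0 hxA
        rw [this]
        have := hfM x
        linarith
      · push_neg at hx
        have := (abs_le.1 (hbd x)).1
        linarith
    · intro x
      simp only [Pi.sub_apply, ContinuousMap.coe_mk]
      by_cases hx : g x ≤ -(M / 3)
      · have hxB : x ∈ B := by
          simp only [hB, mem_compl_iff, mem_preimage, mem_Ioi, not_lt]; exact hx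
        have : u x = 1 := hu1 hxB
        rw [this]
        have := hgM x
        linarith
      · push_neg at hx
        have := (abs_le.1 (hbd x)).2
        linarith

open Classical in
noncomputable def ktH {X : Type*} [TopologicalSpace X] [NormalSpace X] (f g : X → ℝ) (M : ℝ) :
    C(X, ℝ) :=
  if h : KTInv f g M then (kt_step h).choose else 0

lemma ktH_spec {X : Type*} [TopologicalSpace X] [NormalSpace X] {f g : X → ℝ} {M : ℝ}
    (h : KTInv f g M) :
    (∀ x, |ktH f g M x| ≤ M / 3) ∧
      KTInv (f - ⇑(ktH f g M)) (g - ⇑(ktH f g M)) (2 / 3 * M) := by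
  rw [ktH, dif_pos h]
  exact (kt_step h).choose_spec

noncomputable def ktSeq {X : Type*} [TopologicalSpace X] [NormalSpace X]
    (f g : X → ℝ) (M : ℝ) : ℕ → (X → ℝ) × (X → ℝ) × ℝ
  | 0 => (f, g, M)
  | n + 1 =>
    let p := ktSeq f g M n
    (p.1 - ⇑(ktH p.1 p.2.1 p.2.2), p.2.1 - ⇑(ktH p.1 p.2.1 p.2.2), 2 / 3 * p.2.2)

lemma ktSeq_M {X : Type*} [TopologicalSpace X] [NormalSpace X]
    (f g : X → ℝ) (M : ℝ) : ∀ n, (ktSeq f g M n).2.2 = (2 / 3) ^ n * M := by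
  intro n
  induction n with
  | zero => simp [ktSeq]
  | succ n ih => rw [ktSeq, ih, pow_succ]; ring

lemma ktSeq_inv {X : Type*} [TopologicalSpace X] [NormalSpace X]
    {f g : X → ℝ} {M : ℝ} (h0 : KTInv f g M) :
    ∀ n, KTInv (ktSeq f g M n).1 (ktSeq f g M n).2.1 (ktSeq f g M n).2.2 := by
  intro n
  induction n with
  | zero => exact h0
  | succ n ih => exact (ktH_spec ih).2

theorem stmt_2' {X : Type*} [TopologicalSpace X] [CompactSpace X] [T2Space X]
    (f g : X → ℝ)
    (hfb : ∃ M : ℝ, ∀ x, |f x| ≤ M) (hgb : ∃ M : ℝ, ∀ x, |g x| ≤ M)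
    (hf : ∀ l : ℝ, IsOpen (f ⁻¹' Set.Iio l)) (hg : ∀ l : ℝ, IsOpen (g ⁻¹' Set.Ioi l))
    (hfg : ∀ x, f x ≤ g x) :
    ∃ a : X → ℝ, Continuous a ∧ ∀ x, f x ≤ a x ∧ a x ≤ g x := by
  obtain ⟨M1, hM1⟩ := hfb
  obtain ⟨M2, hM2⟩ := hgb
  set M : ℝ := |M1| + |M2| + 1 with hMdef
  have hM : 0 < M := by positivity
  have h0 : KTInv f g M := by
    refine ⟨hM, upperSemicontinuous_iff_isOpen_preimage.2 hf,
      lowerSemicontinuous_iff_isOpen_preimage.2 hg, hfg, ?_, ?_⟩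
    · intro x
      have := hM1 x
      have := le_abs_self M1
      have := (abs_le.1 (hM1 x)).2
      nlinarith [abs_nonneg M2, le_abs_self M1]
    · intro x
      have h1 := (abs_le.1 (hM2 x)).1
      nlinarith [le_abs_self M2, abs_nonneg M1]
  set p : ℕ → (X → ℝ) × (X → ℝ) × ℝ := ktSeq f g M with hp
  set H : ℕ → C(X, ℝ) := fun n => ktH (p n).1 (p n).2.1 (p n).2.2 with hH
  have hinv : ∀ n, KTInv (p n).1 (p n).2.1 (p n).2.2 := ktSeq_inv h0
  have hstep1 : ∀ n, (p (n + 1)).1 = (p n).1 - ⇑(H n) := fun n => rfl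
  have hstep2 : ∀ n, (p (n + 1)).2.1 = (p n).2.1 - ⇑(H n) := fun n => rfl
  have hMn : ∀ n, (p n).2.2 = (2 / 3) ^ n * M := ktSeq_M f g M
  have hHb : ∀ n x, |H n x| ≤ (2 / 3) ^ n * (M / 3) := by
    intro n x
    calc |H n x| ≤ (p n).2.2 / 3 := (ktH_spec (hinv n)).1 x
      _ = (2 / 3) ^ n * (M / 3) := by rw [hMn n]; ring
  have hu : Summable fun n => (2 / 3 : ℝ) ^ n * (M / 3) :=
    (summable_geometric_of_lt_one (by norm_num) (by norm_num)).mul_right _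
  have hsum : ∀ x, Summable fun n => H n x := fun x =>
    Summable.of_norm_bounded hu fun n => by
      rw [Real.norm_eq_abs]; exact hHb n x
  set a : X → ℝ := fun x => ∑' n, H n x with ha
  have hacont : Continuous a :=
    continuous_tsum (fun n => (H n).continuous) hu fun n x => by
      rw [Real.norm_eq_abs]; exact hHb n x
  have hpart1 : ∀ n x, (p n).1 x = f x - ∑ k ∈ Finset.range n, H k x := by
    intro n
    induction n with
    | zero => intro x; simp [hp, ktSeq]
    | succ n ih =>
      intro x
      rw [hstep1 n]
      simp only [Pi.sub_apply, ih x, Finset.sum_range_succ]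
      ring
  have hpart2 : ∀ n x, (p n).2.1 x = g x - ∑ k ∈ Finset.range n, H k x := by
    intro n
    induction n with
    | zero => intro x; simp [hp, ktSeq]
    | succ n ih =>
      intro x
      rw [hstep2 n]
      simp only [Pi.sub_apply, ih x, Finset.sum_range_succ]
      ring
  have hgeo : Filter.Tendsto (fun n => (2 / 3 : ℝ) ^ n * M) Filter.atTop (nhds 0) := by
    have := (tendsto_pow_atTop_nhds_zero_of_lt_one (by norm_num : (0:ℝ) ≤ 2/3)
      (by norm_num : (2/3 : ℝ) < 1)).mul_const M
    simpa using this
  refine ⟨a, hacont, fun x => ⟨?_, ?_⟩⟩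
  · have ht : Filter.Tendsto (fun n => ∑ k ∈ Finset.range n, H k x) Filter.atTop (nhds (a x)) :=
      (hsum x).hasSum.tendsto_sum_nat
    have h1 : Filter.Tendsto (fun n => f x - ∑ k ∈ Finset.range n, H k x)
        Filter.atTop (nhds (f x - a x)) := tendsto_const_nhds.sub ht
    have hle : f x - a x ≤ 0 := by
      refine le_of_tendsto_of_tendsto' h1 hgeo fun n => ?_
      rw [← hpart1 n x]
      have := (hinv n).2.2.2.2.1 x
      rw [hMn n] at this
      exact this
    linarith
  · have ht : Filter.Tendsto (fun n => ∑ k ∈ Finset.range n, H k x) Filter.atTop (nhds (a x)) :=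
      (hsum x).hasSum.tendsto_sum_nat
    have h1 : Filter.Tendsto (fun n => g x - ∑ k ∈ Finset.range n, H k x)
        Filter.atTop (nhds (g x - a x)) := tendsto_const_nhds.sub ht
    have hgeo' : Filter.Tendsto (fun n => -((2 / 3 : ℝ) ^ n * M)) Filter.atTop (nhds 0) := by
      simpa using hgeo.neg
    have hle : (0 : ℝ) ≤ g x - a x := by
      refine le_of_tendsto_of_tendsto' hgeo' h1 fun n => ?_
      rw [← hpart2 n x]
      have := (hinv n).2.2.2.2.2 x
      rw [hMn n] at this
      exact this
    linarith


/-- Katětov–Tong, compact case: On a compact Hausdorff space, if `f` is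
bounded usc, `g` is bounded lsc, and `f ≤ g`, then there is a continuous `a` with
`f ≤ a ≤ g`. -/
theorem stmt_2 {X : Type*} [TopologicalSpace X] [CompactSpace X] [T2Space X]
    (f g : X → ℝ)
    (hfb : ∃ M : ℝ, ∀ x, |f x| ≤ M) (hgb : ∃ M : ℝ, ∀ x, |g x| ≤ M)
    (hf : ∀ l : ℝ, IsOpen (f ⁻¹' Set.Iio l)) (hg : ∀ l : ℝ, IsOpen (g ⁻¹' Set.Ioi l))
    (hfg : ∀ x, f x ≤ g x) :
    ∃ a : X → ℝ, Continuous a ∧ ∀ x, f x ≤ a x ∧ a x ≤ g x := by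
  exact stmt_2' f g hfb hgb hf hg hfg
end

section
/- Let X be a dense subspace of a compact Hausdorff space Y and let f be a bounded upper semicontinuous real-valued function on X. Define U(f) : Y → ℝ by U(f)(y) = inf over open neighborhoods U of y in Y of sup_{x ∈ U ∩ X} f(x). Then U(f) is a bounded upper semicontinuous function on Y and U(f) extends f, i.e., U(f)(x) = f(x) for all x ∈ X. -/
/-- The upper extension `U(f)` of a function `f` defined on a subspace `X ⊆ Y`:
`U(f)(y) = inf over open neighborhoods U of y of sup_{x ∈ U ∩ X} f(x)`. -/
noncomputable def upperExt {Y : Type*} [TopologicalSpace Y] (X : Set Y) (f : X → ℝ)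
    (y : Y) : ℝ :=
  sInf ((fun U : Set Y => sSup (f '' {x : X | (x : Y) ∈ U})) '' {U : Set Y | IsOpen U ∧ y ∈ U})

/-- For `X` dense in a compact Hausdorff `Y` and `f` bounded usc on `X`,
`U(f)` is bounded, usc on `Y`, and extends `f`. -/
theorem stmt_3 {Y : Type*} [TopologicalSpace Y] [CompactSpace Y] [T2Space Y]
    (X : Set Y) (hX : Dense X) (f : X → ℝ)
    (hfb : ∃ M : ℝ, ∀ x, |f x| ≤ M)
    (hf : ∀ l : ℝ, IsOpen (f ⁻¹' Set.Iio l)) :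
    (∃ M : ℝ, ∀ y, |upperExt X f y| ≤ M) ∧
      (∀ l : ℝ, IsOpen (upperExt X f ⁻¹' Set.Iio l)) ∧
      ∀ x : X, upperExt X f x = f x := by
  obtain ⟨M, hM⟩ := hfb
  have hne : ∀ (y : Y) (U : Set Y), IsOpen U → y ∈ U → {x : X | (x : Y) ∈ U}.Nonempty := by
    intro y U hU hyU
    obtain ⟨x, hxX, hxU⟩ := hX.exists_mem_open hU ⟨y, hyU⟩
    exact ⟨⟨x, hxX⟩, hxU⟩
  have hbddA : BddAbove (Set.range f) := ⟨M, by rintro _ ⟨x, rfl⟩; exact (abs_le.1 (hM x)).2⟩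
  have hbddA' : ∀ U : Set Y, BddAbove (f '' {x : X | (x : Y) ∈ U}) :=
    fun U => hbddA.mono (Set.image_subset_range _ _)
  have hg_bounds : ∀ (y : Y) (U : Set Y), IsOpen U → y ∈ U →
      -M ≤ sSup (f '' {x : X | (x : Y) ∈ U}) ∧ sSup (f '' {x : X | (x : Y) ∈ U}) ≤ M := by
    intro y U hU hyU
    obtain ⟨x0, hx0⟩ := hne y U hU hyU
    constructor
    · exact le_trans (abs_le.1 (hM x0)).1 (le_csSup (hbddA' U) ⟨x0, hx0, rfl⟩)
    · exact csSup_le ⟨f x0, x0, hx0, rfl⟩ (by rintro _ ⟨x, hx, rfl⟩; exact (abs_le.1 (hM x)).2)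
  set S : Y → Set ℝ :=
    fun y => (fun U : Set Y => sSup (f '' {x : X | (x : Y) ∈ U})) '' {U | IsOpen U ∧ y ∈ U}
    with hS
  have hUE : ∀ y, upperExt X f y = sInf (S y) := fun y => rfl
  have hSne : ∀ y, (S y).Nonempty := fun y => ⟨_, ⟨Set.univ, ⟨isOpen_univ, trivial⟩, rfl⟩⟩
  have hSbdd : ∀ y, BddBelow (S y) := by
    intro y
    refine ⟨-M, ?_⟩
    rintro _ ⟨U, ⟨hU, hyU⟩, rfl⟩
    exact (hg_bounds y U hU hyU).1
  refine ⟨⟨M, fun y => ?_⟩, fun l => ?_, fun x => ?_⟩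
  · rw [hUE, abs_le]
    constructor
    · exact le_csInf (hSne y) (by rintro _ ⟨U, ⟨hU, hyU⟩, rfl⟩; exact (hg_bounds y U hU hyU).1)
    · exact le_trans (csInf_le (hSbdd y) ⟨Set.univ, ⟨isOpen_univ, trivial⟩, rfl⟩)
        (hg_bounds y Set.univ isOpen_univ trivial).2
  · rw [isOpen_iff_forall_mem_open]
    intro y hy
    have hy' : sInf (S y) < l := by rw [← hUE]; exact hy
    obtain ⟨a, ⟨U, ⟨hU, hyU⟩, rfl⟩, hal⟩ := exists_lt_of_csInf_lt (hSne y) hy'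
    refine ⟨U, fun y' hy'' => ?_, hU, hyU⟩
    show upperExt X f y' < l
    rw [hUE]
    exact lt_of_le_of_lt (csInf_le (hSbdd y') ⟨U, ⟨hU, hy''⟩, rfl⟩) hal
  · rw [hUE]
    apply le_antisymm
    · apply le_of_forall_pos_le_add
      intro ε hε
      obtain ⟨V, hV, hVpre⟩ := isOpen_induced_iff.1 (hf (f x + ε))
      have hxV : (x : Y) ∈ V := by
        have : x ∈ (Subtype.val ⁻¹' V : Set X) := by
          rw [hVpre]; simp only [Set.mem_preimage, Set.mem_Iio]; linarith
        exact this
      refine le_trans (csInf_le (hSbdd x) ⟨V, ⟨hV, hxV⟩, rfl⟩) ?_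
      refine csSup_le ⟨f x, x, hxV, rfl⟩ ?_
      rintro _ ⟨x', hx', rfl⟩
      have : x' ∈ f ⁻¹' Set.Iio (f x + ε) := by rw [← hVpre]; exact hx'
      exact le_of_lt (Set.mem_Iio.1 this)
    · apply le_csInf (hSne x)
      rintro _ ⟨U, ⟨hU, hxU⟩, rfl⟩
      exact le_csSup (hbddA' U) ⟨x, hxU, rfl⟩
end

section
/- Let X be a dense subspace of a compact Hausdorff space Y and let f be a bounded lower semicontinuous real-valued function on X. Define L(f) : Y → ℝ by L(f)(y) = sup over open neighborhoods U of y in Y of inf_{x ∈ U ∩ X} f(x). Then L(f) is a bounded lower semicontinuous function on Y and L(f) extends f, i.e., L(f)(x) = f(x) for all x ∈ X. -/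
/-- The lower extension `L(f)` of a function `f` defined on a subspace `X ⊆ Y`:
`L(f)(y) = sup over open neighborhoods U of y of inf_{x ∈ U ∩ X} f(x)`. -/
noncomputable def lowerExt {Y : Type*} [TopologicalSpace Y] (X : Set Y) (f : X → ℝ)
    (y : Y) : ℝ :=
  sSup ((fun U : Set Y => sInf (f '' {x : X | (x : Y) ∈ U})) '' {U : Set Y | IsOpen U ∧ y ∈ U})

/-- For `X` dense in a compact Hausdorff `Y` and `f` bounded lsc on `X`,
`L(f)` is bounded, lsc on `Y`, and extends `f`. -/
theorem stmt_4 {Y : Type*} [TopologicalSpace Y] [CompactSpace Y] [T2Space Y]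
    (X : Set Y) (hX : Dense X) (f : X → ℝ)
    (hfb : ∃ M : ℝ, ∀ x, |f x| ≤ M)
    (hf : ∀ l : ℝ, IsOpen (f ⁻¹' Set.Ioi l)) :
    (∃ M : ℝ, ∀ y, |lowerExt X f y| ≤ M) ∧
      (∀ l : ℝ, IsOpen (lowerExt X f ⁻¹' Set.Ioi l)) ∧
      ∀ x : X, lowerExt X f x = f x := by
  obtain ⟨M, hM⟩ := hfb
  set S : Y → Set ℝ := fun y =>
    (fun U : Set Y => sInf (f '' {x : X | (x : Y) ∈ U})) '' {U : Set Y | IsOpen U ∧ y ∈ U}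
    with hS
  -- for open U containing some point, U ∩ X is nonempty
  have hTne : ∀ U : Set Y, IsOpen U → U.Nonempty →
      ({x : X | (x : Y) ∈ U}).Nonempty := by
    intro U hU hUne
    obtain ⟨x, hxX, hxU⟩ := hX.exists_mem_open hU hUne
    exact ⟨⟨x, hxX⟩, hxU⟩
  have hbdd : ∀ T : Set X, BddBelow (f '' T) := by
    intro T
    exact ⟨-M, by rintro v ⟨x, -, rfl⟩; exact neg_le_of_abs_le (hM x)⟩
  -- bounds on elements of S y
  have helem : ∀ y : Y, ∀ v ∈ S y, -M ≤ v ∧ v ≤ M := by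
    intro y v hv
    obtain ⟨U, ⟨hU, hyU⟩, rfl⟩ := hv
    obtain ⟨x, hx⟩ := hTne U hU ⟨y, hyU⟩
    constructor
    · apply le_csInf ⟨f x, Set.mem_image_of_mem f hx⟩
      rintro w ⟨z, -, rfl⟩
      exact neg_le_of_abs_le (hM z)
    · exact le_trans (csInf_le (hbdd _) ⟨x, hx, rfl⟩) (le_of_abs_le (hM x))
  have hSne : ∀ y : Y, (S y).Nonempty :=
    fun y => ⟨_, Set.mem_image_of_mem _ ⟨isOpen_univ, Set.mem_univ y⟩⟩
  have hSbdd : ∀ y : Y, BddAbove (S y) :=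
    fun y => ⟨M, fun v hv => (helem y v hv).2⟩
  refine ⟨⟨M, fun y => ?_⟩, fun l => ?_, fun x => ?_⟩
  · rw [abs_le]
    constructor
    · obtain ⟨v, hv⟩ := hSne y
      exact le_trans (helem y v hv).1 (le_csSup (hSbdd y) hv)
    · exact csSup_le (hSne y) (fun v hv => (helem y v hv).2)
  · rw [isOpen_iff_forall_mem_open]
    intro y hy
    have : l < sSup (S y) := hy
    obtain ⟨v, hv, hlv⟩ := exists_lt_of_lt_csSup (hSne y) this
    obtain ⟨U, ⟨hU, hyU⟩, rfl⟩ := hv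
    refine ⟨U, fun y' hy' => ?_, hU, hyU⟩
    have hmem : sInf (f '' {x : X | (x : Y) ∈ U}) ∈ S y' :=
      Set.mem_image_of_mem _ ⟨hU, hy'⟩
    exact lt_of_lt_of_le hlv (le_csSup (hSbdd y') hmem)
  · apply le_antisymm
    · apply csSup_le (hSne x)
      rintro v ⟨U, ⟨hU, hxU⟩, rfl⟩
      exact csInf_le (hbdd _) ⟨x, hxU, rfl⟩
    · apply le_of_forall_lt
      intro c hc
      set c' : ℝ := (c + f x) / 2 with hc'
      have hcc' : c < c' := by rw [hc']; linarith
      have hc'f : c' < f x := by rw [hc']; linarith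
      obtain ⟨V, hV, hVeq⟩ := isOpen_induced_iff.mp (hf c')
      have hxV : (x : Y) ∈ V := by
        have : x ∈ f ⁻¹' Set.Ioi c' := hc'f
        rw [← hVeq] at this; exact this
      have hmem : sInf (f '' {z : X | (z : Y) ∈ V}) ∈ S (x : Y) :=
        Set.mem_image_of_mem _ ⟨hV, hxV⟩
      have hinf : c' ≤ sInf (f '' {z : X | (z : Y) ∈ V}) := by
        apply le_csInf ⟨f x, Set.mem_image_of_mem f hxV⟩
        rintro w ⟨z, hz, rfl⟩
        have : z ∈ f ⁻¹' Set.Ioi c' := by rw [← hVeq]; exact hz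
        exact le_of_lt this
      calc c < c' := hcc'
        _ ≤ sInf (f '' {z : X | (z : Y) ∈ V}) := hinf
        _ ≤ sSup (S (x : Y)) := le_csSup (hSbdd _) hmem
end

section
/- Let X be a normal Hausdorff space, viewed as a dense subspace of its Stone–Čech compactification βX. If f is a bounded upper semicontinuous real-valued function on X and g is a bounded lower semicontinuous real-valued function on X with f(x) ≤ g(x) for all x ∈ X, then U(f)(y) ≤ L(g)(y) for all y ∈ βX, where U(f)(y) = inf over open neighborhoods U of y in βX of sup_{x ∈ U ∩ X} f(x) and L(g)(y) = sup over open neighborhoods U of y in βX of inf_{x ∈ U ∩ X} g(x). -/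
/-- `U(f)` on the Stone–Čech compactification:
`U(f)(y) = inf over open neighborhoods U of y in βX of sup_{x ∈ U ∩ X} f(x)`. -/
noncomputable def scUpperExt {X : Type*} [TopologicalSpace X] (f : X → ℝ)
    (y : StoneCech X) : ℝ :=
  sInf ((fun U : Set (StoneCech X) => sSup (f '' (stoneCechUnit ⁻¹' U)))
    '' {U : Set (StoneCech X) | IsOpen U ∧ y ∈ U})

/-- `L(g)` on the Stone–Čech compactification:
`L(g)(y) = sup over open neighborhoods U of y in βX of inf_{x ∈ U ∩ X} g(x)`. -/
noncomputable def scLowerExt {X : Type*} [TopologicalSpace X] (g : X → ℝ)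
    (y : StoneCech X) : ℝ :=
  sSup ((fun U : Set (StoneCech X) => sInf (g '' (stoneCechUnit ⁻¹' U)))
    '' {U : Set (StoneCech X) | IsOpen U ∧ y ∈ U})

/-- For a normal Hausdorff space `X`, if `f` is bounded usc, `g` is bounded
lsc and `f ≤ g` on `X`, then `U(f) ≤ L(g)` on `βX`. -/
theorem stmt_5 {X : Type*} [TopologicalSpace X] [NormalSpace X] [T2Space X]
    (f g : X → ℝ)
    (hfb : ∃ M : ℝ, ∀ x, |f x| ≤ M) (hgb : ∃ M : ℝ, ∀ x, |g x| ≤ M)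
    (hf : ∀ l : ℝ, IsOpen (f ⁻¹' Set.Iio l)) (hg : ∀ l : ℝ, IsOpen (g ⁻¹' Set.Ioi l))
    (hfg : ∀ x, f x ≤ g x) :
    ∀ y : StoneCech X, scUpperExt f y ≤ scLowerExt g y := by
  obtain ⟨M, hM⟩ := hfb
  obtain ⟨N, hN⟩ := hgb
  intro y
  by_contra hcon
  push_neg at hcon
  -- boundedness of the auxiliary sets
  have hBddU : BddBelow ((fun U : Set (StoneCech X) => sSup (f '' (stoneCechUnit ⁻¹' U)))
      '' {U : Set (StoneCech X) | IsOpen U ∧ y ∈ U}) := by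
    refine ⟨min (-M) 0, ?_⟩
    rintro r ⟨U, hU, rfl⟩
    dsimp only
    by_cases h : (stoneCechUnit ⁻¹' U : Set X).Nonempty
    · obtain ⟨x, hx⟩ := h
      refine le_trans (min_le_left _ _) (le_trans (abs_le.mp (hM x)).1 ?_)
      exact le_csSup ⟨M, by rintro _ ⟨z, _, rfl⟩; exact (abs_le.mp (hM z)).2⟩ ⟨x, hx, rfl⟩
    · rw [Set.not_nonempty_iff_eq_empty.mp h]
      simp [Real.sSup_empty]
  have hBddL : BddAbove ((fun U : Set (StoneCech X) => sInf (g '' (stoneCechUnit ⁻¹' U)))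
      '' {U : Set (StoneCech X) | IsOpen U ∧ y ∈ U}) := by
    refine ⟨max N 0, ?_⟩
    rintro r ⟨U, hU, rfl⟩
    dsimp only
    by_cases h : (stoneCechUnit ⁻¹' U : Set X).Nonempty
    · obtain ⟨x, hx⟩ := h
      refine le_trans ?_ (le_max_left _ _)
      refine le_trans (csInf_le ⟨-N, by rintro _ ⟨z, _, rfl⟩; exact (abs_le.mp (hN z)).1⟩
        ⟨x, hx, rfl⟩) (abs_le.mp (hN x)).2
    · rw [Set.not_nonempty_iff_eq_empty.mp h]
      simp [Real.sInf_empty]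
  have haveU : ∀ U : Set (StoneCech X), IsOpen U → y ∈ U →
      scUpperExt f y ≤ sSup (f '' (stoneCechUnit ⁻¹' U)) :=
    fun U hU hy => csInf_le hBddU ⟨U, ⟨hU, hy⟩, rfl⟩
  have haveL : ∀ U : Set (StoneCech X), IsOpen U → y ∈ U →
      sInf (g '' (stoneCechUnit ⁻¹' U)) ≤ scLowerExt g y :=
    fun U hU hy => le_csSup hBddL ⟨U, ⟨hU, hy⟩, rfl⟩
  -- all preimages must be nonempty, else scUpperExt ≤ 0 ≤ scLowerExt
  by_cases hne : ∀ U : Set (StoneCech X), IsOpen U → y ∈ U →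
      (stoneCechUnit ⁻¹' U : Set X).Nonempty
  swap
  · push_neg at hne
    obtain ⟨U, hU, hy, hemp⟩ := hne
    rw [← Set.not_nonempty_iff_eq_empty] at hemp
    rw [Set.not_nonempty_iff_eq_empty] at hemp
    have h1 := haveU U hU hy
    have h2 := haveL U hU hy
    rw [hemp] at h1 h2
    simp [Real.sSup_empty, Real.sInf_empty] at h1 h2
    exact absurd (le_trans h1 h2) (not_le.mpr hcon)
  set a := scUpperExt f y
  set b := scLowerExt g y
  set c' : ℝ := b + (a - b) / 3 with hc'
  set c : ℝ := b + 2 * ((a - b) / 3) with hc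
  have hab : b < a := hcon
  have hbc' : b < c' := by simp [hc']; linarith
  have hc'c : c' < c := by simp [hc', hc]; linarith
  have hca : c < a := by simp [hc]; linarith
  set A : Set X := {x | c ≤ f x} with hA
  set B : Set X := {x | g x ≤ c'} with hB
  have hAclosed : IsClosed A := by
    have : A = (f ⁻¹' Set.Iio c)ᶜ := by ext x; simp [hA, not_lt]
    rw [this]; exact (hf c).isClosed_compl
  have hBclosed : IsClosed B := by
    have : B = (g ⁻¹' Set.Ioi c')ᶜ := by ext x; simp [hB, not_lt]
    rw [this]; exact (hg c').isClosed_compl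
  have hdisj : Disjoint A B := by
    rw [Set.disjoint_left]
    intro x hxA hxB
    have : c ≤ c' := le_trans hxA (le_trans (hfg x) hxB)
    exact absurd this (not_le.mpr hc'c)
  have hyA : y ∈ closure (stoneCechUnit '' A) := by
    rw [mem_closure_iff]
    intro U hU hy
    have h1 := haveU U hU hy
    have hne' : (f '' (stoneCechUnit ⁻¹' U)).Nonempty := (hne U hU hy).image f
    obtain ⟨r, ⟨x, hx, rfl⟩, hr⟩ := exists_lt_of_lt_csSup hne' (lt_of_lt_of_le hca h1)
    exact ⟨stoneCechUnit x, hx, ⟨x, le_of_lt hr, rfl⟩⟩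
  have hyB : y ∈ closure (stoneCechUnit '' B) := by
    rw [mem_closure_iff]
    intro U hU hy
    have h2 := haveL U hU hy
    have hne' : (g '' (stoneCechUnit ⁻¹' U)).Nonempty := (hne U hU hy).image g
    obtain ⟨r, ⟨x, hx, rfl⟩, hr⟩ := exists_lt_of_csInf_lt hne' (lt_of_le_of_lt h2 hbc')
    exact ⟨stoneCechUnit x, hx, ⟨x, le_of_lt hr, rfl⟩⟩
  -- Urysohn separation, extended to βX
  obtain ⟨h, h0, h1, hmem⟩ := exists_continuous_zero_one_of_isClosed hAclosed hBclosed hdisj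
  haveI : CompactSpace (Set.Icc (0:ℝ) 1) := isCompact_iff_compactSpace.mp isCompact_Icc
  have hcont : Continuous (fun x : X => (⟨h x, hmem x⟩ : Set.Icc (0:ℝ) 1)) :=
    h.continuous.subtype_mk _
  set H := stoneCechExtend hcont with hH
  have hext : H ∘ stoneCechUnit = fun x : X => (⟨h x, hmem x⟩ : Set.Icc (0:ℝ) 1) :=
    stoneCechExtend_extends hcont
  have hH0 : H y = ⟨0, by norm_num⟩ := by
    have hclosed : IsClosed {z : StoneCech X | H z = ⟨0, by norm_num⟩} :=
      isClosed_eq (continuous_stoneCechExtend hcont) continuous_const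
    have hsub : stoneCechUnit '' A ⊆ {z : StoneCech X | H z = ⟨0, by norm_num⟩} := by
      rintro _ ⟨x, hx, rfl⟩
      have := congrFun hext x
      simp only [Function.comp_apply] at this
      rw [Set.mem_setOf_eq, this]
      exact Subtype.ext (h0 hx)
    exact hclosed.closure_subset_iff.mpr hsub hyA
  have hH1 : H y = ⟨1, by norm_num⟩ := by
    have hclosed : IsClosed {z : StoneCech X | H z = ⟨1, by norm_num⟩} :=
      isClosed_eq (continuous_stoneCechExtend hcont) continuous_const
    have hsub : stoneCechUnit '' B ⊆ {z : StoneCech X | H z = ⟨1, by norm_num⟩} := by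
      rintro _ ⟨x, hx, rfl⟩
      have := congrFun hext x
      simp only [Function.comp_apply] at this
      rw [Set.mem_setOf_eq, this]
      exact Subtype.ext (h1 hx)
    exact hclosed.closure_subset_iff.mpr hsub hyB
  rw [hH0] at hH1
  exact absurd (congrArg Subtype.val hH1) (by norm_num)
end

section
/- (Katětov–Tong theorem) Let X be a normal Hausdorff space. If f is a bounded upper semicontinuous real-valued function on X and g is a bounded lower semicontinuous real-valued function on X with f(x) ≤ g(x) for all x ∈ X, then there exists a bounded continuous function h : X → ℝ with f(x) ≤ h(x) ≤ g(x) for all x ∈ X. -/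
/-- Approximate insertion: between a bounded usc `u` and a bounded lsc `v` with `u ≤ v`,
for any `ε > 0` there is a continuous `w` with `u - ε ≤ w ≤ v + ε`.
Built as a finite sum of Urysohn functions on a grid of scale `ε`. -/
theorem approx_ins {X : Type*} [TopologicalSpace X] [NormalSpace X]
    (u v : X → ℝ) (M : ℝ)
    (hu : ∀ l : ℝ, IsOpen (u ⁻¹' Set.Iio l))
    (hv : ∀ l : ℝ, IsOpen (v ⁻¹' Set.Ioi l))
    (hub : ∀ x, |u x| ≤ M) (hvb : ∀ x, |v x| ≤ M)
    (huv : ∀ x, u x ≤ v x) {ε : ℝ} (hε : 0 < ε) :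
    ∃ w : C(X, ℝ), ∀ x, u x - ε ≤ w x ∧ w x ≤ v x + ε := by
  set N : ℕ := ⌈2 * M / ε⌉₊ with hNdef
  have hA : ∀ i : ℕ, IsClosed {x | -M + ((i : ℝ) + 1) * ε ≤ u x} := by
    intro i
    have h1 : {x | -M + ((i : ℝ) + 1) * ε ≤ u x}
        = (u ⁻¹' Set.Iio (-M + ((i : ℝ) + 1) * ε))ᶜ := by
      ext x; simp [not_lt]
    rw [h1]; exact (hu _).isClosed_compl
  have hB : ∀ i : ℕ, IsClosed {x | v x ≤ -M + (i : ℝ) * ε} := by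
    intro i
    have h1 : {x | v x ≤ -M + (i : ℝ) * ε}
        = (v ⁻¹' Set.Ioi (-M + (i : ℝ) * ε))ᶜ := by
      ext x; simp [not_lt]
    rw [h1]; exact (hv _).isClosed_compl
  have hdisj : ∀ i : ℕ, Disjoint {x | v x ≤ -M + (i : ℝ) * ε}
      {x | -M + ((i : ℝ) + 1) * ε ≤ u x} := by
    intro i
    rw [Set.disjoint_left]
    rintro x (h1 : v x ≤ _) (h2 : _ ≤ u x)
    have h3 := huv x
    nlinarith
  have hury : ∀ i : ℕ, ∃ φ : C(X, ℝ),
      Set.EqOn φ 0 {x | v x ≤ -M + (i : ℝ) * ε} ∧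
      Set.EqOn φ 1 {x | -M + ((i : ℝ) + 1) * ε ≤ u x} ∧
      ∀ x, φ x ∈ Set.Icc (0 : ℝ) 1 :=
    fun i => exists_continuous_zero_one_of_isClosed (hB i) (hA i) (hdisj i)
  choose φ hφ0 hφ1 hφmem using hury
  refine ⟨⟨fun x => -M + ∑ i ∈ Finset.range N, ε * φ i x, by
    exact continuous_const.add (continuous_finset_sum _ fun i _ =>
      continuous_const.mul (φ i).continuous)⟩, ?_⟩
  intro x
  simp only [ContinuousMap.coe_mk]
  have hux := abs_le.1 (hub x)
  have hvx := abs_le.1 (hvb x)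
  have hc : (0 : ℝ) ≤ (u x + M) / ε := by
    apply div_nonneg _ hε.le; linarith [hux.1]
  have hc' : (0 : ℝ) ≤ (v x + M) / ε := by
    apply div_nonneg _ hε.le; linarith [hvx.1]
  constructor
  · -- lower bound
    set k : ℕ := min N ⌊(u x + M) / ε⌋₊ with hkdef
    have hk1 : ∀ i ∈ Finset.range k, ε * φ i x = ε := by
      intro i hi
      have hik : i < ⌊(u x + M) / ε⌋₊ := lt_of_lt_of_le (Finset.mem_range.1 hi) (min_le_right _ _)
      have : ((i : ℝ) + 1) ≤ (u x + M) / ε := by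
        have h1 : (i : ℕ) + 1 ≤ ⌊(u x + M) / ε⌋₊ := hik
        have h2 : ((i + 1 : ℕ) : ℝ) ≤ (⌊(u x + M) / ε⌋₊ : ℝ) := Nat.cast_le.2 h1
        calc ((i : ℝ) + 1) = ((i + 1 : ℕ) : ℝ) := by push_cast; ring
          _ ≤ (⌊(u x + M) / ε⌋₊ : ℝ) := h2
          _ ≤ (u x + M) / ε := Nat.floor_le hc
      have hmem : x ∈ {y | -M + ((i : ℝ) + 1) * ε ≤ u y} := by
        have := (le_div_iff₀ hε).1 this
        show -M + ((i : ℝ) + 1) * ε ≤ u x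
        linarith
      rw [hφ1 i hmem]; simp
    have hsub : Finset.range k ⊆ Finset.range N :=
      Finset.range_subset_range.2 (min_le_left _ _)
    have hlow : (k : ℝ) * ε ≤ ∑ i ∈ Finset.range N, ε * φ i x := by
      calc (k : ℝ) * ε = ∑ i ∈ Finset.range k, ε * φ i x := by
            rw [Finset.sum_congr rfl hk1]; simp [mul_comm]
        _ ≤ ∑ i ∈ Finset.range N, ε * φ i x :=
            Finset.sum_le_sum_of_subset_of_nonneg hsub
              (fun i _ _ => mul_nonneg hε.le (hφmem i x).1)
    have hkey : u x + M ≤ ((k : ℝ) + 1) * ε := by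
      rcases le_or_gt N ⌊(u x + M) / ε⌋₊ with hcase | hcase
      · have hkN : k = N := min_eq_left hcase
        have h1 : 2 * M / ε ≤ (N : ℝ) := Nat.le_ceil _
        have h2 : 2 * M ≤ (N : ℝ) * ε := by
          rw [div_le_iff₀ hε] at h1; linarith
        rw [hkN]; nlinarith [hux.2]
      · have hkF : k = ⌊(u x + M) / ε⌋₊ := min_eq_right hcase.le
        have h1 : (u x + M) / ε < (⌊(u x + M) / ε⌋₊ : ℝ) + 1 := Nat.lt_floor_add_one _
        rw [hkF]
        have := (div_lt_iff₀ hε).1 h1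
        linarith
    linarith
  · -- upper bound
    set m : ℕ := ⌊(v x + M) / ε⌋₊ with hmdef
    have hm0 : ∀ i : ℕ, m < i → φ i x = 0 := by
      intro i hi
      have h1 : (v x + M) / ε < (m : ℝ) + 1 := Nat.lt_floor_add_one _
      have h2 : ((m : ℝ) + 1) ≤ (i : ℝ) := by exact_mod_cast hi
      have h3 : v x + M < (i : ℝ) * ε := by
        have := (div_lt_iff₀ hε).1 h1
        nlinarith
      have hmem : x ∈ {y | v y ≤ -M + (i : ℝ) * ε} := by
        show v x ≤ -M + (i : ℝ) * ε; linarith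
      rw [hφ0 i hmem]; simp
    have hup1 : ∑ i ∈ Finset.range N, ε * φ i x
        ≤ ∑ i ∈ Finset.range N, (if i ≤ m then ε else 0) := by
      apply Finset.sum_le_sum
      intro i _
      split_ifs with h
      · exact mul_le_of_le_one_right hε.le (hφmem i x).2
      · rw [hm0 i (not_le.1 h), mul_zero]
    have hup2 : ∑ i ∈ Finset.range N, (if i ≤ m then ε else 0)
        ≤ ((m : ℝ) + 1) * ε := by
      rw [← Finset.sum_filter, Finset.sum_const]
      have hcard : ((Finset.range N).filter (· ≤ m)).card ≤ m + 1 := by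
        have hsub : (Finset.range N).filter (· ≤ m) ⊆ Finset.range (m + 1) :=
          fun i hi => Finset.mem_range.2 (Nat.lt_succ_of_le (Finset.mem_filter.1 hi).2)
        simpa using Finset.card_le_card hsub
      calc (((Finset.range N).filter (· ≤ m)).card : ℕ) • ε
          = (((Finset.range N).filter (· ≤ m)).card : ℝ) * ε := by
            rw [nsmul_eq_mul]
        _ ≤ ((m : ℝ) + 1) * ε := by
            apply mul_le_mul_of_nonneg_right _ hε.le
            calc ((((Finset.range N).filter (· ≤ m)).card : ℕ) : ℝ)
                ≤ ((m + 1 : ℕ) : ℝ) := Nat.cast_le.2 hcard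
              _ = (m : ℝ) + 1 := by push_cast; ring
    have hmle : (m : ℝ) * ε ≤ v x + M := by
      have := Nat.floor_le hc'
      have h2 := (le_div_iff₀ hε).1 this
      linarith
    linarith


/-- Katětov–Tong: On a normal Hausdorff space, if `f` is bounded usc,
`g` is bounded lsc, and `f ≤ g`, then there is a bounded continuous `h` with
`f ≤ h ≤ g`. -/
theorem stmt_6 {X : Type*} [TopologicalSpace X] [NormalSpace X] [T2Space X]
    (f g : X → ℝ)
    (hfb : ∃ M : ℝ, ∀ x, |f x| ≤ M) (hgb : ∃ M : ℝ, ∀ x, |g x| ≤ M)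
    (hf : ∀ l : ℝ, IsOpen (f ⁻¹' Set.Iio l)) (hg : ∀ l : ℝ, IsOpen (g ⁻¹' Set.Ioi l))
    (hfg : ∀ x, f x ≤ g x) :
    ∃ h : X → ℝ, Continuous h ∧ (∃ M : ℝ, ∀ x, |h x| ≤ M) ∧
      ∀ x, f x ≤ h x ∧ h x ≤ g x := by
  obtain ⟨Mf, hMf⟩ := hfb
  obtain ⟨Mg, hMg⟩ := hgb
  set M0 : ℝ := max Mf Mg with hM0def
  have hfb' : ∀ x, |f x| ≤ M0 := fun x => (hMf x).trans (le_max_left _ _)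
  have hgb' : ∀ x, |g x| ≤ M0 := fun x => (hMg x).trans (le_max_right _ _)
  set P : ℕ → C(X, ℝ) → Prop :=
    fun n h => ∀ x, f x - (1/2 : ℝ)^n ≤ h x ∧ h x ≤ g x + (1/2 : ℝ)^n with hPdef
  -- base case
  have base : ∃ h : C(X, ℝ), P 0 h := by
    obtain ⟨w, hw⟩ := approx_ins f g M0 hf hg hfb' hgb' hfg (ε := 1) one_pos
    exact ⟨w, fun x => by simpa using hw x⟩
  -- inductive step
  have step : ∀ (n : ℕ) (h : C(X, ℝ)), P n h →
      ∃ h' : C(X, ℝ), P (n+1) h' ∧ ∀ x, |h' x - h x| ≤ 2 * (1/2 : ℝ)^n := by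
    intro n h hP
    set e : ℝ := (1/2 : ℝ)^n with hedef
    have he : 0 < e := by positivity
    have he1 : e ≤ 1 := by
      apply pow_le_one₀ <;> norm_num
    have hes : (1/2 : ℝ)^(n+1) = e / 2 := by rw [pow_succ]; ring
    set u : X → ℝ := fun x => max (f x) (h x - e) with hudef
    set v : X → ℝ := fun x => min (g x) (h x + e) with hvdef
    have hu : ∀ l : ℝ, IsOpen (u ⁻¹' Set.Iio l) := by
      intro l
      have h1 : u ⁻¹' Set.Iio l = f ⁻¹' Set.Iio l ∩ {x | h x - e < l} := by
        ext x
        simp [hudef, max_lt_iff]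
      rw [h1]
      exact (hf l).inter (isOpen_lt (h.continuous.sub continuous_const) continuous_const)
    have hv : ∀ l : ℝ, IsOpen (v ⁻¹' Set.Ioi l) := by
      intro l
      have h1 : v ⁻¹' Set.Ioi l = g ⁻¹' Set.Ioi l ∩ {x | l < h x + e} := by
        ext x
        simp [hvdef, lt_min_iff]
      rw [h1]
      exact (hg l).inter (isOpen_lt continuous_const (h.continuous.add continuous_const))
    have hub : ∀ x, |u x| ≤ M0 + 2 := by
      intro x
      have h1 := abs_le.1 (hfb' x)
      have h2 := abs_le.1 (hgb' x)
      have h3 := (hP x).2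
      rw [abs_le]
      constructor
      · calc -(M0 + 2) ≤ f x := by linarith
          _ ≤ u x := le_max_left _ _
      · apply max_le <;> linarith
    have hvb : ∀ x, |v x| ≤ M0 + 2 := by
      intro x
      have h1 := abs_le.1 (hfb' x)
      have h2 := abs_le.1 (hgb' x)
      have h3 := (hP x).1
      rw [abs_le]
      constructor
      · apply le_min <;> linarith
      · calc v x ≤ g x := min_le_left _ _
          _ ≤ M0 + 2 := by linarith
    have huv : ∀ x, u x ≤ v x := by
      intro x
      have h1 := (hP x).1
      have h2 := (hP x).2
      apply max_le <;> apply le_min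
      · exact hfg x
      · linarith
      · linarith
      · linarith
    obtain ⟨w, hw⟩ := approx_ins u v (M0 + 2) hu hv hub hvb huv
      (ε := (1/2 : ℝ)^(n+1)) (by positivity)
    refine ⟨w, fun x => ?_, fun x => ?_⟩
    · have h1 := (hw x).1
      have h2 := (hw x).2
      have h3 : f x ≤ u x := le_max_left _ _
      have h4 : v x ≤ g x := min_le_left _ _
      exact ⟨by linarith, by linarith⟩
    · have h1 := (hw x).1
      have h2 := (hw x).2
      have h3 : h x - e ≤ u x := le_max_right _ _
      have h4 : v x ≤ h x + e := min_le_right _ _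
      rw [hes] at h1 h2
      rw [abs_le]
      constructor <;> linarith
  choose F hF1 hF2 using step
  obtain ⟨h0, hP0⟩ := base
  let seq : ∀ n : ℕ, {h : C(X, ℝ) // P n h} := fun n =>
    Nat.rec (motive := fun n => {h : C(X, ℝ) // P n h}) ⟨h0, hP0⟩
      (fun k ih => ⟨F k ih.1 ih.2, hF1 k ih.1 ih.2⟩) n
  have hdist : ∀ (n : ℕ) (x : X), |(seq (n+1)).1 x - (seq n).1 x| ≤ 2 * (1/2 : ℝ)^n :=
    fun n x => hF2 n (seq n).1 (seq n).2 x
  -- bound each member of the sequence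
  have hbnd : ∀ (n : ℕ) (x : X), |(seq n).1 x| ≤ M0 + 1 := by
    intro n x
    have h1 := ((seq n).2 x).1
    have h2 := ((seq n).2 x).2
    have h3 := abs_le.1 (hfb' x)
    have h4 := abs_le.1 (hgb' x)
    have h5 : (0 : ℝ) < (1/2 : ℝ)^n := by positivity
    have h6 : ((1:ℝ)/2)^n ≤ 1 := by
      apply pow_le_one₀ <;> norm_num
    rw [abs_le]
    constructor <;> linarith
  -- package as bounded continuous functions
  let b : ℕ → BoundedContinuousFunction X ℝ := fun n =>
    BoundedContinuousFunction.mkOfBound (seq n).1 (2 * (M0 + 1)) (by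
      intro x y
      rw [Real.dist_eq, abs_sub_le_iff]
      have h1 := abs_le.1 (hbnd n x)
      have h2 := abs_le.1 (hbnd n y)
      constructor <;> linarith)
  have hbcoe : ∀ (n : ℕ) (x : X), b n x = (seq n).1 x := fun n x => rfl
  have hbdist : ∀ n : ℕ, dist (b n) (b (n+1)) ≤ 2 * (1/2 : ℝ)^n := by
    intro n
    rw [BoundedContinuousFunction.dist_le (by positivity)]
    intro x
    rw [Real.dist_eq, hbcoe, hbcoe, abs_sub_comm]
    exact hdist n x
  have hcauchy : CauchySeq b := cauchySeq_of_le_geometric (1/2) 2 (by norm_num) hbdist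
  obtain ⟨L, hL⟩ := cauchySeq_tendsto_of_complete hcauchy
  have hpt : ∀ x : X, Filter.Tendsto (fun n => b n x) Filter.atTop (nhds (L x)) := by
    intro x
    refine tendsto_iff_dist_tendsto_zero.2 ?_
    refine squeeze_zero (fun n => dist_nonneg)
      (fun n => BoundedContinuousFunction.dist_coe_le_dist x) ?_
    exact tendsto_iff_dist_tendsto_zero.1 hL
  have hpow : Filter.Tendsto (fun n : ℕ => (1/2 : ℝ)^n) Filter.atTop (nhds 0) :=
    tendsto_pow_atTop_nhds_zero_of_lt_one (by norm_num) (by norm_num)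
  have hfL : ∀ x, f x ≤ L x := by
    intro x
    have h1 : Filter.Tendsto (fun n => b n x + (1/2 : ℝ)^n) Filter.atTop (nhds (L x + 0)) :=
      (hpt x).add hpow
    rw [add_zero] at h1
    refine ge_of_tendsto' h1 (fun n => ?_)
    have := ((seq n).2 x).1
    rw [hbcoe]
    linarith
  have hgL : ∀ x, L x ≤ g x := by
    intro x
    have h1 : Filter.Tendsto (fun n => b n x - (1/2 : ℝ)^n) Filter.atTop (nhds (L x - 0)) :=
      (hpt x).sub hpow
    rw [sub_zero] at h1
    refine le_of_tendsto' h1 (fun n => ?_)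
    have := ((seq n).2 x).2
    rw [hbcoe]
    linarith
  refine ⟨L, L.continuous, ⟨M0, fun x => ?_⟩, fun x => ⟨hfL x, hgL x⟩⟩
  have h1 := abs_le.1 (hfb' x)
  have h2 := abs_le.1 (hgb' x)
  have h3 := hfL x
  have h4 := hgL x
  rw [abs_le]
  constructor <;> linarith
end

section
/- Let X be a normal Hausdorff space, viewed as a dense subspace of its Stone–Čech compactification βX. If C and D are disjoint closed subsets of X, then the closures of C and D in βX are disjoint. -/
/-- For a normal Hausdorff space `X`, disjoint closed subsets of `X` have
disjoint closures in the Stone–Čech compactification `βX`. -/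
theorem stmt_7 {X : Type*} [TopologicalSpace X] [NormalSpace X] [T2Space X]
    (C D : Set X) (hC : IsClosed C) (hD : IsClosed D) (hCD : Disjoint C D) :
    Disjoint (closure (stoneCechUnit '' C : Set (StoneCech X)))
      (closure (stoneCechUnit '' D : Set (StoneCech X))) := by
  obtain ⟨f, hf0, hf1, hfI⟩ := exists_continuous_zero_one_of_isClosed hC hD hCD
  set g : X → Set.Icc (0:ℝ) 1 := fun x => ⟨f x, hfI x⟩ with hg_def
  have hg : Continuous g := Continuous.subtype_mk f.continuous _
  set F := stoneCechExtend hg with hF_def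
  have hFext : ∀ x, F (stoneCechUnit x) = g x := fun x =>
    congrFun (stoneCechExtend_extends hg) x
  have hFc : Continuous F := continuous_stoneCechExtend hg
  have h0 : closure (stoneCechUnit '' C : Set (StoneCech X)) ⊆ F ⁻¹' {⟨0, by norm_num⟩} := by
    apply closure_minimal
    · rintro _ ⟨x, hx, rfl⟩
      simp only [Set.mem_preimage, Set.mem_singleton_iff, hFext]
      exact Subtype.ext (hf0 hx)
    · exact (isClosed_singleton).preimage hFc
  have h1 : closure (stoneCechUnit '' D : Set (StoneCech X)) ⊆ F ⁻¹' {⟨1, by norm_num⟩} := by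
    apply closure_minimal
    · rintro _ ⟨x, hx, rfl⟩
      simp only [Set.mem_preimage, Set.mem_singleton_iff, hFext]
      exact Subtype.ext (hf1 hx)
    · exact (isClosed_singleton).preimage hFc
  refine Set.disjoint_left.mpr fun z hz0 hz1 => ?_
  have e0 := h0 hz0
  have e1 := h1 hz1
  simp only [Set.mem_preimage, Set.mem_singleton_iff] at e0 e1
  rw [e0] at e1
  exact zero_ne_one (congrArg Subtype.val e1)
end

section
/- Let X be a completely regular Hausdorff space that is not normal, viewed as a dense subspace of its Stone–Čech compactification βX. Then there exist a bounded upper semicontinuous function f on X and a bounded lower semicontinuous function g on X with f ≤ g pointwise on X, but such that U(f)(y) > L(g)(y) for some y ∈ βX, where U(f)(y) = inf over open neighborhoods U of y in βX of sup_{x ∈ U ∩ X} f(x) and L(g)(y) = sup over open neighborhoods U of y in βX of inf_{x ∈ U ∩ X} g(x). -/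
/-- If `X` is completely regular Hausdorff but not normal, then there are a
bounded usc `f` and a bounded lsc `g` on `X` with `f ≤ g`, yet `U(f)(y) > L(g)(y)` for
some `y ∈ βX`. -/
theorem stmt_9 {X : Type*} [TopologicalSpace X] [CompletelyRegularSpace X] [T2Space X]
    (hnotnormal : ¬ NormalSpace X) :
    ∃ f g : X → ℝ,
      (∃ M : ℝ, ∀ x, |f x| ≤ M) ∧ (∃ M : ℝ, ∀ x, |g x| ≤ M) ∧
      (∀ l : ℝ, IsOpen (f ⁻¹' Set.Iio l)) ∧ (∀ l : ℝ, IsOpen (g ⁻¹' Set.Ioi l)) ∧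
      (∀ x, f x ≤ g x) ∧
      ∃ y : StoneCech X, scLowerExt g y < scUpperExt f y := by
  -- obtain inseparable disjoint closed sets
  obtain ⟨A, B, hA, hB, hAB, hsep⟩ :
      ∃ A B : Set X, IsClosed A ∧ IsClosed B ∧ Disjoint A B ∧ ¬ SeparatedNhds A B := by
    by_contra h
    push_neg at h
    exact hnotnormal ⟨fun s t hs ht hd => h s t hs ht hd⟩
  set f : X → ℝ := A.indicator (fun _ => 1) with hf
  set g : X → ℝ := Bᶜ.indicator (fun _ => 1) with hg
  have hf01 : ∀ x, f x = 0 ∨ f x = 1 := by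
    intro x; by_cases hx : x ∈ A <;> simp [hf, hx]
  have hg01 : ∀ x, g x = 0 ∨ g x = 1 := by
    intro x; by_cases hx : x ∈ Bᶜ <;> simp [hg, hx]
  refine ⟨f, g, ⟨1, ?_⟩, ⟨1, ?_⟩, ?_, ?_, ?_, ?_⟩
  · intro x; rcases hf01 x with h | h <;> simp [h]
  · intro x; rcases hg01 x with h | h <;> simp [h]
  · -- usc of f
    intro l
    rcases le_or_gt l 0 with hl | hl
    · have : f ⁻¹' Set.Iio l = ∅ := by
        ext x; simp only [Set.mem_preimage, Set.mem_Iio, Set.mem_empty_iff_false, iff_false,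
          not_lt]
        rcases hf01 x with h | h <;> rw [h] <;> linarith
      rw [this]; exact isOpen_empty
    · rcases le_or_gt l 1 with hl1 | hl1
      · have : f ⁻¹' Set.Iio l = Aᶜ := by
          ext x
          by_cases hx : x ∈ A <;>
            simp only [Set.mem_preimage, Set.mem_Iio, Set.mem_compl_iff, hx, hf,
              Set.indicator_of_mem, Set.indicator_of_notMem, not_true, not_false_iff,
              iff_true, iff_false, not_lt] <;> first | exact hl1 | exact hl | simpa using hl
        rw [this]; exact hA.isOpen_compl
      · have : f ⁻¹' Set.Iio l = Set.univ := by
          ext x; simp only [Set.mem_preimage, Set.mem_Iio, Set.mem_univ, iff_true]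
          rcases hf01 x with h | h <;> rw [h] <;> linarith
        rw [this]; exact isOpen_univ
  · -- lsc of g
    intro l
    rcases lt_or_ge l 0 with hl | hl
    · have : g ⁻¹' Set.Ioi l = Set.univ := by
        ext x; simp only [Set.mem_preimage, Set.mem_Ioi, Set.mem_univ, iff_true]
        rcases hg01 x with h | h <;> rw [h] <;> linarith
      rw [this]; exact isOpen_univ
    · rcases lt_or_ge l 1 with hl1 | hl1
      · have : g ⁻¹' Set.Ioi l = Bᶜ := by
          ext x
          by_cases hx : x ∈ Bᶜ
          · simp [hg, Set.indicator_of_mem hx, hx, hl1]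
          · simp [hg, Set.indicator_of_notMem hx, hx, not_lt.mpr hl]
        rw [this]; exact hB.isOpen_compl
      · have : g ⁻¹' Set.Ioi l = ∅ := by
          ext x; simp only [Set.mem_preimage, Set.mem_Ioi, Set.mem_empty_iff_false, iff_false,
            not_lt]
          rcases hg01 x with h | h <;> rw [h] <;> linarith
        rw [this]; exact isOpen_empty
  · -- f ≤ g
    intro x
    by_cases hx : x ∈ A
    · have hxB : x ∈ Bᶜ := fun hxB => hAB.ne_of_mem hx hxB rfl
      simp [hf, hg, hx, hxB]
    · rcases hg01 x with h | h <;> simp [hf, hx, h]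
  · -- the point y
    have hclos : (closure (stoneCechUnit '' A) ∩ closure (stoneCechUnit '' B)).Nonempty := by
      by_contra hne
      rw [Set.not_nonempty_iff_eq_empty] at hne
      have hdisj : Disjoint (closure (stoneCechUnit '' A)) (closure (stoneCechUnit '' B)) :=
        Set.disjoint_iff_inter_eq_empty.mpr hne
      obtain ⟨u, v, hu, hv, hsu, htv, huv⟩ :=
        NormalSpace.normal _ _ isClosed_closure isClosed_closure hdisj
      apply hsep
      refine ⟨stoneCechUnit ⁻¹' u, stoneCechUnit ⁻¹' v,
        hu.preimage continuous_stoneCechUnit, hv.preimage continuous_stoneCechUnit,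
        ?_, ?_, huv.preimage _⟩
      · intro x hx
        exact hsu (subset_closure ⟨x, hx, rfl⟩)
      · intro x hx
        exact htv (subset_closure ⟨x, hx, rfl⟩)
    obtain ⟨y, hyA, hyB⟩ := hclos
    refine ⟨y, ?_⟩
    have hUeq : ∀ U : Set (StoneCech X), IsOpen U → y ∈ U →
        sSup (f '' (stoneCechUnit ⁻¹' U)) = 1 := by
      intro U hU hyU
      obtain ⟨z, hzU, a, haA, rfl⟩ := mem_closure_iff.mp hyA U hU hyU
      have hfa : f a = 1 := Set.indicator_of_mem haA _
      have hne : (f '' (stoneCechUnit ⁻¹' U)).Nonempty := ⟨f a, a, hzU, rfl⟩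
      apply le_antisymm
      · apply csSup_le hne
        rintro b ⟨x, _, rfl⟩
        rcases hf01 x with h | h <;> rw [h] <;> norm_num
      · refine le_csSup ⟨1, ?_⟩ ⟨a, hzU, hfa⟩
        rintro b ⟨x, _, rfl⟩
        rcases hf01 x with h | h <;> rw [h] <;> norm_num
    have hLeq : ∀ U : Set (StoneCech X), IsOpen U → y ∈ U →
        sInf (g '' (stoneCechUnit ⁻¹' U)) = 0 := by
      intro U hU hyU
      obtain ⟨z, hzU, b, hbB, rfl⟩ := mem_closure_iff.mp hyB U hU hyU
      have hgb : g b = 0 := Set.indicator_of_notMem (by simpa using hbB) _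
      apply le_antisymm
      · refine csInf_le ⟨0, ?_⟩ ⟨b, hzU, hgb⟩
        rintro c ⟨x, _, rfl⟩
        rcases hg01 x with h | h <;> rw [h] <;> norm_num
      · have hne : (g '' (stoneCechUnit ⁻¹' U)).Nonempty := ⟨g b, b, hzU, rfl⟩
        apply le_csInf hne
        rintro c ⟨x, _, rfl⟩
        rcases hg01 x with h | h <;> rw [h] <;> norm_num
    have hSup : scUpperExt f y = 1 := by
      have : ((fun U : Set (StoneCech X) => sSup (f '' (stoneCechUnit ⁻¹' U)))
          '' {U : Set (StoneCech X) | IsOpen U ∧ y ∈ U}) = {1} := by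
        apply Set.eq_singleton_iff_nonempty_unique_mem.mpr
        constructor
        · exact ⟨_, ⟨Set.univ, ⟨isOpen_univ, Set.mem_univ y⟩, rfl⟩⟩
        · rintro b ⟨U, ⟨hU, hyU⟩, rfl⟩
          exact hUeq U hU hyU
      rw [scUpperExt, this, csInf_singleton]
    have hInf : scLowerExt g y = 0 := by
      have : ((fun U : Set (StoneCech X) => sInf (g '' (stoneCechUnit ⁻¹' U)))
          '' {U : Set (StoneCech X) | IsOpen U ∧ y ∈ U}) = {0} := by
        apply Set.eq_singleton_iff_nonempty_unique_mem.mpr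
        constructor
        · exact ⟨_, ⟨Set.univ, ⟨isOpen_univ, Set.mem_univ y⟩, rfl⟩⟩
        · rintro c ⟨U, ⟨hU, hyU⟩, rfl⟩
          exact hLeq U hU hyU
      rw [scLowerExt, this, csSup_singleton]
    rw [hSup, hInf]
    norm_num
end

section
/- Let X be a compact Hausdorff space and let A be an ℓ-subalgebra of C(X) that separates the points of X. If f is a bounded upper semicontinuous real-valued function on X, then f is closed relative to A, i.e., f is the pointwise infimum of some subset of A. -/
/-- For a compact Hausdorff `X` and an ℓ-subalgebra `A` of `C(X)` separating
points, every bounded usc function is a pointwise infimum of a subset of `A`. -/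
theorem stmt_12 {X : Type*} [TopologicalSpace X] [CompactSpace X] [T2Space X]
    (A : Subalgebra ℝ (ContinuousMap X ℝ))
    (hlat : ∀ f ∈ A, ∀ g ∈ A, f ⊔ g ∈ A ∧ f ⊓ g ∈ A)
    (hsep : ∀ x y : X, x ≠ y → ∃ a ∈ A, a x ≠ a y)
    (f : X → ℝ) (hfb : ∃ M : ℝ, ∀ x, |f x| ≤ M)
    (hf : ∀ l : ℝ, IsOpen (f ⁻¹' Set.Iio l)) :
    ∃ S : Set (ContinuousMap X ℝ), S ⊆ (A : Set (ContinuousMap X ℝ)) ∧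
      ∀ x, f x = sInf ((fun a => a x) '' S) := by
  obtain ⟨M, hM⟩ := hfb
  -- key: for each x and ε > 0 there is a ∈ A with f < a pointwise and a x ≤ f x + ε
  have key : ∀ x : X, ∀ ε : ℝ, 0 < ε →
      ∃ a : C(X, ℝ), a ∈ A ∧ (∀ z, f z < a z) ∧ a x ≤ f x + ε := by
    intro x ε hε
    have hε2 : 0 < ε / 2 := by linarith
    -- for each y, an element of A equal to f x + ε/2 at x and > f y at y
    have hb : ∀ y : X, ∃ b : C(X, ℝ), b ∈ A ∧ b x = f x + ε / 2 ∧ f y < b y := by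
      intro y
      by_cases hy : f y < f x + ε / 2
      · exact ⟨algebraMap ℝ C(X, ℝ) (f x + ε / 2), A.algebraMap_mem _, rfl, hy⟩
      · have hxy : y ≠ x := by
          intro h; subst h; exact hy (by linarith)
        obtain ⟨c, hc, hcne⟩ := hsep y x hxy
        have hd : c y - c x ≠ 0 := sub_ne_zero.mpr hcne
        refine ⟨algebraMap ℝ C(X, ℝ) (f x + ε / 2) +
            ((f y - f x) / (c y - c x)) • (c - algebraMap ℝ C(X, ℝ) (c x)),
          A.add_mem (A.algebraMap_mem _)
            (A.smul_mem (A.sub_mem hc (A.algebraMap_mem _)) _), ?_, ?_⟩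
        · simp
        · have : ((f y - f x) / (c y - c x)) * (c y - c x) = f y - f x :=
            div_mul_cancel₀ _ hd
          have halg : ∀ r : ℝ, ∀ z : X, (algebraMap ℝ C(X, ℝ) r) z = r := fun r z => rfl
          simp only [ContinuousMap.add_apply, ContinuousMap.smul_apply,
            ContinuousMap.sub_apply, smul_eq_mul, halg]
          rw [this]
          linarith
    choose b hbA hbx hby using hb
    -- the open sets where f < b y
    have hU : ∀ y : X, IsOpen {z | f z < b y z} := by
      intro y
      have : {z | f z < b y z} =
          ⋃ q : ℚ, (f ⁻¹' Set.Iio (q : ℝ)) ∩ ((b y) ⁻¹' Set.Ioi (q : ℝ)) := by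
        ext z
        simp only [Set.mem_setOf_eq, Set.mem_iUnion, Set.mem_inter_iff, Set.mem_preimage,
          Set.mem_Iio, Set.mem_Ioi]
        constructor
        · intro h
          obtain ⟨q, hq1, hq2⟩ := exists_rat_btwn h
          exact ⟨q, hq1, hq2⟩
        · rintro ⟨q, hq1, hq2⟩; linarith
      rw [this]
      exact isOpen_iUnion fun q =>
        (hf q).inter (isOpen_Ioi.preimage (b y).continuous)
    have hcover : (Set.univ : Set X) ⊆ ⋃ y : X, {z | f z < b y z} := by
      intro z _
      exact Set.mem_iUnion.mpr ⟨z, hby z⟩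
    obtain ⟨t, ht⟩ := isCompact_univ.elim_finite_subcover _ hU hcover
    have htx : ∃ y, y ∈ t := by
      have := ht (Set.mem_univ x)
      simp only [Set.mem_iUnion] at this
      obtain ⟨y, hy, _⟩ := this
      exact ⟨y, hy⟩
    have htne : t.Nonempty := htx
    refine ⟨t.sup' htne b, ?_, ?_, ?_⟩
    · exact Finset.sup'_mem (A : Set C(X, ℝ))
        (fun u hu v hv => (hlat u hu v hv).1) t htne b (fun y _ => hbA y)
    · intro z
      have := ht (Set.mem_univ z)
      simp only [Set.mem_iUnion] at this
      obtain ⟨y, hyt, hyz⟩ := this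
      calc f z < b y z := hyz
        _ ≤ (t.sup' htne b) z := by
            rw [ContinuousMap.sup'_apply]
            exact Finset.le_sup' (fun y => b y z) hyt
    · rw [ContinuousMap.sup'_apply]
      have : (t.sup' htne fun y => b y x) ≤ f x + ε / 2 :=
        Finset.sup'_le _ _ fun y _ => le_of_eq (hbx y)
      linarith
  -- the set S
  refine ⟨{a : C(X, ℝ) | a ∈ A ∧ ∀ z, f z ≤ a z}, fun a ha => ha.1, ?_⟩
  intro x
  have hSne : ((fun a : C(X, ℝ) => a x) '' {a | a ∈ A ∧ ∀ z, f z ≤ a z}).Nonempty := by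
    refine ⟨_, ⟨algebraMap ℝ C(X, ℝ) M, ⟨A.algebraMap_mem _, fun z => ?_⟩, rfl⟩⟩
    have := hM z
    have := abs_le.mp this
    simpa using this.2
  have hbdd : BddBelow ((fun a : C(X, ℝ) => a x) '' {a | a ∈ A ∧ ∀ z, f z ≤ a z}) := by
    refine ⟨f x, ?_⟩
    rintro v ⟨a, ⟨_, hfa⟩, rfl⟩
    exact hfa x
  refine le_antisymm ?_ ?_
  · exact le_csInf hSne (by rintro v ⟨a, ⟨_, hfa⟩, rfl⟩; exact hfa x)
  · refine le_of_forall_pos_le_add fun ε hε => ?_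
    obtain ⟨a, haA, hfa, hax⟩ := key x ε hε
    calc sInf ((fun a : C(X, ℝ) => a x) '' {a | a ∈ A ∧ ∀ z, f z ≤ a z})
        ≤ a x := csInf_le hbdd ⟨a, ⟨haA, fun z => (hfa z).le⟩, rfl⟩
      _ ≤ f x + ε := hax
end

section
/- Let X be a compact Hausdorff space and let A be an ℓ-subalgebra of C(X) that separates the points of X. If g is a bounded lower semicontinuous real-valued function on X, then g is open relative to A, i.e., g is the pointwise supremum of some subset of A. -/
/-- Key approximation lemma: for each point and ε, find `a ∈ A` below `g` with
`a x₀ ≥ g x₀ - ε`. -/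
lemma key_below {X : Type*} [TopologicalSpace X] [CompactSpace X] [T2Space X]
    (A : Subalgebra ℝ (ContinuousMap X ℝ))
    (hsep : ∀ x y : X, x ≠ y → ∃ a ∈ A, a x ≠ a y)
    (g : X → ℝ) (m : ℝ) (hm : ∀ x, m ≤ g x)
    (hg : ∀ l : ℝ, IsOpen (g ⁻¹' Set.Ioi l))
    (x₀ : X) (ε : ℝ) (hε : 0 < ε) :
    ∃ a ∈ A, (∀ x, a x ≤ g x) ∧ g x₀ - ε ≤ a x₀ := by
  set δ := ε / 3 with hδdef
  have hδ : 0 < δ := by positivity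
  set U : Set X := g ⁻¹' Set.Ioi (g x₀ - δ) with hU
  have hUopen : IsOpen U := hg _
  have hx₀U : x₀ ∈ U := by simp [hU]; linarith
  -- Urysohn
  obtain ⟨f, hf0, hf1, hf01⟩ := exists_continuous_zero_one_of_isClosed
    (hUopen.isClosed_compl) (isClosed_singleton (x := x₀))
    (Set.disjoint_singleton_right.mpr fun h => h hx₀U)
  -- h = m + (g x₀ - δ - m) • f
  set h : ContinuousMap X ℝ := ContinuousMap.const X m + (g x₀ - δ - m) • f with hh
  have hhx : ∀ x, h x = m + (g x₀ - δ - m) * f x := by intro x; simp [hh]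
  have hhle : ∀ x, h x ≤ g x := by
    intro x
    by_cases hx : x ∈ U
    · have h1 : g x₀ - δ ≤ g x := le_of_lt (by simpa [hU] using hx)
      have h2 : m ≤ g x := hm x
      have h3 : (0:ℝ) ≤ f x := (hf01 x).1
      have h4 : f x ≤ 1 := (hf01 x).2
      rw [hhx]
      nlinarith
    · have : f x = 0 := hf0 hx
      rw [hhx, this]
      simpa using hm x
  have hhx₀ : h x₀ = g x₀ - δ := by
    have h1 : f x₀ = 1 := hf1 rfl
    rw [hhx, h1]; ring
  -- Stone–Weierstrass approximation
  have hsep' : A.SeparatesPoints := by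
    intro x y hxy
    obtain ⟨a, haA, hane⟩ := hsep x y hxy
    exact ⟨(a : X → ℝ), ⟨a, haA, rfl⟩, hane⟩
  obtain ⟨⟨a, haA⟩, han⟩ :=
    ContinuousMap.exists_mem_subalgebra_near_continuousMap_of_separatesPoints A hsep' h δ hδ
  have hdist : ∀ x, |a x - h x| < δ := by
    intro x
    calc |a x - h x| = ‖(a - h) x‖ := by simp [Real.norm_eq_abs]
    _ ≤ ‖a - h‖ := (a - h).norm_coe_le_norm x
    _ < δ := han
  refine ⟨a - algebraMap ℝ _ δ, sub_mem haA (Subalgebra.algebraMap_mem A δ), ?_, ?_⟩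
  · intro x
    have := hdist x
    have h2 := hhle x
    have hax : (a - algebraMap ℝ _ δ) x = a x - δ := by
      simp [algebraMap_apply]
    rw [hax]
    cases abs_lt.mp this with
    | intro h3 h4 => linarith
  · have := hdist x₀
    have hax : (a - algebraMap ℝ _ δ) x₀ = a x₀ - δ := by
      simp [algebraMap_apply]
    rw [hax]
    cases abs_lt.mp this with
    | intro h3 h4 => rw [hhx₀] at h3 h4; linarith [hδdef]

/-- For a compact Hausdorff `X` and an ℓ-subalgebra `A` of `C(X)` separating
points, every bounded lsc function is a pointwise supremum of a subset of `A`. -/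
theorem stmt_13 {X : Type*} [TopologicalSpace X] [CompactSpace X] [T2Space X]
    (A : Subalgebra ℝ (ContinuousMap X ℝ))
    (hlat : ∀ f ∈ A, ∀ g ∈ A, f ⊔ g ∈ A ∧ f ⊓ g ∈ A)
    (hsep : ∀ x y : X, x ≠ y → ∃ a ∈ A, a x ≠ a y)
    (g : X → ℝ) (hgb : ∃ M : ℝ, ∀ x, |g x| ≤ M)
    (hg : ∀ l : ℝ, IsOpen (g ⁻¹' Set.Ioi l)) :
    ∃ T : Set (ContinuousMap X ℝ), T ⊆ (A : Set (ContinuousMap X ℝ)) ∧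
      ∀ x, g x = sSup ((fun a => a x) '' T) := by
  obtain ⟨M, hM⟩ := hgb
  have hm : ∀ x, -M ≤ g x := fun x => neg_le_of_abs_le (hM x)
  refine ⟨{a | a ∈ A ∧ ∀ x, a x ≤ g x}, fun a ha => ha.1, fun x => ?_⟩
  have hmem : (algebraMap ℝ (ContinuousMap X ℝ) (-M)) ∈
      {a : ContinuousMap X ℝ | a ∈ A ∧ ∀ x, a x ≤ g x} :=
    ⟨Subalgebra.algebraMap_mem A (-M), fun y => by
      simpa [algebraMap_apply] using hm y⟩
  have hne : ((fun a : ContinuousMap X ℝ => a x) ''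
      {a | a ∈ A ∧ ∀ x, a x ≤ g x}).Nonempty := ⟨_, _, hmem, rfl⟩
  have hbdd : BddAbove ((fun a : ContinuousMap X ℝ => a x) ''
      {a | a ∈ A ∧ ∀ x, a x ≤ g x}) := by
    refine ⟨g x, ?_⟩
    rintro _ ⟨a, ⟨_, hle⟩, rfl⟩
    exact hle x
  refine le_antisymm ?_ (csSup_le hne (by rintro _ ⟨a, ⟨_, hle⟩, rfl⟩; exact hle x))
  refine le_of_forall_pos_le_add fun ε hε => ?_
  obtain ⟨a, haA, hle, hx⟩ := key_below A hsep g (-M) hm hg x ε hε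
  have : a x ≤ sSup ((fun a : ContinuousMap X ℝ => a x) ''
      {a | a ∈ A ∧ ∀ x, a x ≤ g x}) :=
    le_csSup hbdd ⟨a, ⟨haA, hle⟩, rfl⟩
  linarith
end

section
/- Let X be a compact Hausdorff space and let A be an ℓ-subalgebra of C(X) that separates the points of X. If h ∈ C(X), then h is clopen relative to A, i.e., h is both the pointwise infimum of some subset of A and the pointwise supremum of some subset of A. -/
lemma aux_inf {X : Type*} [TopologicalSpace X] [CompactSpace X] [T2Space X]
    (A : Subalgebra ℝ (ContinuousMap X ℝ)) (w : A.SeparatesPoints)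
    (h : ContinuousMap X ℝ) :
    ∃ S : Set (ContinuousMap X ℝ), S ⊆ (A : Set (ContinuousMap X ℝ)) ∧
      ∀ x, h x = sInf ((fun a => a x) '' S) := by
  refine ⟨{a | a ∈ A ∧ ∀ x, h x ≤ a x}, fun a ha => ha.1, fun x => ?_⟩
  have key : ∀ ε : ℝ, 0 < ε → ∃ a : ContinuousMap X ℝ, a ∈ A ∧ (∀ y, h y ≤ a y) ∧
      a x ≤ h x + 2 * ε := by
    intro ε hε
    obtain ⟨g, hg⟩ := ContinuousMap.exists_mem_subalgebra_near_continuousMap_of_separatesPoints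
      A w h ε hε
    refine ⟨(g : ContinuousMap X ℝ) + (algebraMap ℝ (ContinuousMap X ℝ) ε),
      add_mem g.2 (Subalgebra.algebraMap_mem A ε), ?_, ?_⟩
    · intro y
      have := ContinuousMap.norm_coe_le_norm ((g : ContinuousMap X ℝ) - h) y
      simp only [ContinuousMap.sub_apply] at this
      have h1 : |g.1 y - h y| < ε := lt_of_le_of_lt this hg
      have := abs_lt.mp h1
      have he : (algebraMap ℝ (ContinuousMap X ℝ)) ε y = ε := by simp
      simp only [ContinuousMap.add_apply, he]
      linarith [this.1]
    · have := ContinuousMap.norm_coe_le_norm ((g : ContinuousMap X ℝ) - h) x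
      simp only [ContinuousMap.sub_apply] at this
      have h1 : |g.1 x - h x| < ε := lt_of_le_of_lt this hg
      have := abs_lt.mp h1
      have he : (algebraMap ℝ (ContinuousMap X ℝ)) ε x = ε := by simp
      simp only [ContinuousMap.add_apply, he]
      linarith [this.2]
  have hne : ((fun a : ContinuousMap X ℝ => a x) ''
      {a | a ∈ A ∧ ∀ x, h x ≤ a x}).Nonempty := by
    obtain ⟨a, ha, hle, _⟩ := key 1 one_pos
    exact ⟨a x, ⟨a, ⟨ha, hle⟩, rfl⟩⟩
  refine (IsGLB.csInf_eq ⟨?_, ?_⟩ hne).symm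
  · rintro _ ⟨a, ⟨-, hle⟩, rfl⟩
    exact hle x
  · intro b hb
    by_contra hcon
    push_neg at hcon
    obtain ⟨a, ha, hle, hax⟩ := key ((b - h x) / 4) (by linarith)
    have : b ≤ a x := hb ⟨a, ⟨ha, hle⟩, rfl⟩
    linarith

/-- For a compact Hausdorff `X` and an ℓ-subalgebra `A` of `C(X)` separating
points, every continuous function is clopen relative to `A`. -/
theorem stmt_14 {X : Type*} [TopologicalSpace X] [CompactSpace X] [T2Space X]
    (A : Subalgebra ℝ (ContinuousMap X ℝ))
    (hlat : ∀ f ∈ A, ∀ g ∈ A, f ⊔ g ∈ A ∧ f ⊓ g ∈ A)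
    (hsep : ∀ x y : X, x ≠ y → ∃ a ∈ A, a x ≠ a y)
    (h : ContinuousMap X ℝ) :
    (∃ S : Set (ContinuousMap X ℝ), S ⊆ (A : Set (ContinuousMap X ℝ)) ∧
      ∀ x, h x = sInf ((fun a => a x) '' S)) ∧
    (∃ T : Set (ContinuousMap X ℝ), T ⊆ (A : Set (ContinuousMap X ℝ)) ∧
      ∀ x, h x = sSup ((fun a => a x) '' T)) := by
  have w : A.SeparatesPoints := by
    intro x y hxy
    obtain ⟨a, ha, hne⟩ := hsep x y hxy
    exact ⟨_, ⟨a, ha, rfl⟩, hne⟩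
  refine ⟨aux_inf A w h, ?_⟩
  obtain ⟨S, hS, hval⟩ := aux_inf A w (-h)
  refine ⟨Neg.neg '' S, ?_, fun x => ?_⟩
  · rintro _ ⟨a, haS, rfl⟩
    exact neg_mem (hS haS)
  · have : (fun a : ContinuousMap X ℝ => a x) '' (Neg.neg '' S) =
        -((fun a : ContinuousMap X ℝ => a x) '' S) := by
      rw [Set.image_image]
      ext t
      simp only [Set.mem_image, Set.mem_neg, ContinuousMap.neg_apply]
      constructor
      · rintro ⟨a, haS, rfl⟩
        exact ⟨a, haS, by ring⟩
      · rintro ⟨a, haS, hr⟩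
        exact ⟨a, haS, by linarith⟩
    rw [this]
    have hsup : sSup (-((fun a : ContinuousMap X ℝ => a x) '' S)) =
        -sInf ((fun a : ContinuousMap X ℝ => a x) '' S) := by
      rw [Real.sInf_def, neg_neg]
    rw [hsup]
    have := hval x
    simp only [ContinuousMap.neg_apply] at this
    linarith
end
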